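/- Let C ⊆ 𝔽₂ⁿ be a linear code (a subspace), and for each weight i let a_i = |{x ∈ C : |x| = i}| where |x| is the Hamming weight. Let f = (2ⁿ/|C|)·1_C and 0 ≤ ε ≤ 1/2. Then max_x (T_ε f)(x) = (T_ε f)(0) = (2ⁿ/|C|)·Σ_{i=0}^n a_i ε^i (1−ε)^{n−i}. -/

import Mathlib

open Finset

noncomputable def noiseOp {ι : Type*} [Fintype ι] [DecidableEq ι] (ε : ℝ)
    (f : (ι → ZMod 2) → ℝ) (x : ι → ZMod 2) : ℝ :=
  ∑ y : ι → ZMod 2,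
    ε ^ hammingDist y x * (1 - ε) ^ (Fintype.card ι - hammingDist y x) * f y

noncomputable def sgn (b : ZMod 2) : ℝ := if b = 0 then 1 else -1

lemma sgn_zero : sgn 0 = 1 := rfl

lemma sgn_le_one (b : ZMod 2) : sgn b ≤ 1 := by
  rcases (by decide : ∀ d : ZMod 2, d = 0 ∨ d = 1) b with rfl | rfl <;> simp +decide [sgn]

lemma sgn_add (a b : ZMod 2) : sgn (a + b) = sgn a * sgn b := by
  rcases (by decide : ∀ d : ZMod 2, d = 0 ∨ d = 1) a with rfl | rfl <;>
    rcases (by decide : ∀ d : ZMod 2, d = 0 ∨ d = 1) b with rfl | rfl <;> simp +decide [sgn]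

lemma sgn_sub (a b : ZMod 2) : sgn (a - b) = sgn a * sgn b := by
  rcases (by decide : ∀ d : ZMod 2, d = 0 ∨ d = 1) a with rfl | rfl <;>
    rcases (by decide : ∀ d : ZMod 2, d = 0 ∨ d = 1) b with rfl | rfl <;> simp +decide [sgn]

lemma sgn_sum {ι : Type*} (s : Finset ι) (w : ι → ZMod 2) :
    sgn (∑ i ∈ s, w i) = ∏ i ∈ s, sgn (w i) := by
  induction s using Finset.cons_induction with
  | empty => simp [sgn_zero]
  | cons i s hi ih => rw [Finset.sum_cons, Finset.prod_cons, sgn_add, ih]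

variable {n : ℕ}

noncomputable def dot (S z : Fin n → ZMod 2) : ZMod 2 := ∑ i, S i * z i

lemma dot_sub (S x y : Fin n → ZMod 2) : dot S (x - y) = dot S x - dot S y := by
  simp [dot, mul_sub, Finset.sum_sub_distrib]

lemma sgn_dot_sub (S x y : Fin n → ZMod 2) :
    sgn (dot S (x - y)) = sgn (dot S x) * sgn (dot S y) := by
  rw [dot_sub, sgn_sub]

-- character sum nonneg
lemma charSum_nonneg (C : Submodule (ZMod 2) (Fin n → ZMod 2)) (S : Fin n → ZMod 2) :
    0 ≤ ∑ c ∈ (C : Set (Fin n → ZMod 2)).toFinite.toFinset, sgn (dot S c) := by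
  classical
  set Cs := (C : Set (Fin n → ZMod 2)).toFinite.toFinset with hCs
  by_cases h : ∀ c ∈ Cs, dot S c = 0
  · apply Finset.sum_nonneg
    intro c hc
    rw [h c hc, sgn_zero]; norm_num
  · push_neg at h
    obtain ⟨c₀, hc₀, hd⟩ := h
    have hd1 : dot S c₀ = 1 := by
      generalize dot S c₀ = d at hd ⊢; revert d; decide
    have hsum : ∑ c ∈ Cs, sgn (dot S c) = ∑ c ∈ Cs, sgn (dot S (c + c₀)) := by
      apply Finset.sum_nbij' (fun c => c + c₀) (fun c => c + c₀)
      · intro c hc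
        simp only [hCs, Set.Finite.mem_toFinset, SetLike.mem_coe] at hc ⊢
        exact C.add_mem hc ((hCs ▸ Set.Finite.mem_toFinset _).mp hc₀)
      · intro c hc
        simp only [hCs, Set.Finite.mem_toFinset, SetLike.mem_coe] at hc ⊢
        exact C.add_mem hc ((hCs ▸ Set.Finite.mem_toFinset _).mp hc₀)
      · intro c _
        rw [add_assoc, show c₀ + c₀ = 0 from funext fun i => CharTwo.add_self_eq_zero _,
          add_zero]
      · intro c _
        rw [add_assoc, show c₀ + c₀ = 0 from funext fun i => CharTwo.add_self_eq_zero _,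
          add_zero]
      · intro c _
        rw [add_assoc, show c₀ + c₀ = 0 from funext fun i => CharTwo.add_self_eq_zero _,
          add_zero]
    have : ∀ c, sgn (dot S (c + c₀)) = - sgn (dot S c) := by
      intro c
      have : dot S (c + c₀) = dot S c + dot S c₀ := by
        simp [dot, mul_add, Finset.sum_add_distrib]
      rw [this, sgn_add, hd1]
      simp [sgn]
    simp_rw [this] at hsum
    rw [Finset.sum_neg_distrib] at hsum
    linarith

lemma prod_ite_const (S : Fin n → ZMod 2) (ρ : ℝ) :
    ∏ i, (if S i = 0 then (1:ℝ) else ρ) = ρ ^ hammingNorm S := by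
  classical
  rw [Finset.prod_ite, Finset.prod_const, Finset.prod_const, one_pow, one_mul]
  rfl

lemma expand (ε : ℝ) (z : Fin n → ZMod 2) :
    (2:ℝ)^n * (ε ^ hammingNorm z * (1-ε) ^ (n - hammingNorm z))
      = ∑ S : Fin n → ZMod 2, (1 - 2*ε) ^ hammingNorm S * sgn (dot S z) := by
  classical
  have h1 : ε ^ hammingNorm z * (1-ε) ^ (n - hammingNorm z)
      = ∏ i, (if z i = 0 then (1-ε) else ε) := by
    rw [Finset.prod_ite, Finset.prod_const, Finset.prod_const]
    have hcard : ({i | ¬ z i = 0} : Finset (Fin n)).card = hammingNorm z := rfl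
    have hcard2 : ({i | z i = 0} : Finset (Fin n)).card = n - hammingNorm z := by
      have h := Finset.card_filter_add_card_filter_not (s := (univ : Finset (Fin n)))
        (p := fun i => z i = 0)
      have hn : hammingNorm z ≤ n := by
        simpa using hammingNorm_le_card_fintype (x := z)
      simp only [Finset.card_univ, Fintype.card_fin] at h
      rw [show (Finset.filter (fun i => ¬ z i = 0) univ).card = hammingNorm z from rfl] at h
      omega
    rw [hcard, hcard2, mul_comm]
  rw [h1]
  have h2 : (2:ℝ)^n * ∏ i, (if z i = 0 then (1-ε) else ε)
      = ∏ i : Fin n, ∑ b : ZMod 2, (if b = 0 then (1:ℝ) else (1-2*ε) * sgn (z i)) := by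
    rw [show ((2:ℝ)^n) = ∏ _i : Fin n, (2:ℝ) by
      rw [Finset.prod_const, Finset.card_univ, Fintype.card_fin]]
    rw [← Finset.prod_mul_distrib]
    apply Finset.prod_congr rfl
    intro i _
    rw [show (univ : Finset (ZMod 2)) = {0,1} from rfl]
    by_cases h : z i = 0 <;> simp [h, sgn] <;> ring
  rw [h2, Finset.prod_univ_sum, Fintype.piFinset_univ]
  apply Finset.sum_congr rfl
  intro S _
  have hper : ∀ i, (if S i = 0 then (1:ℝ) else (1-2*ε) * sgn (z i))
      = (if S i = 0 then (1:ℝ) else (1-2*ε)) * sgn (S i * z i) := by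
    intro i
    by_cases h : S i = 0
    · simp [h, sgn_zero]
    · have h1 : S i = 1 := by generalize S i = d at h ⊢; revert d; decide
      simp [h1]
  simp_rw [hper]
  rw [Finset.prod_mul_distrib, prod_ite_const, ← sgn_sum]
  rfl

lemma key (C : Submodule (ZMod 2) (Fin n → ZMod 2)) {ε : ℝ} (hε0 : 0 ≤ ε) (hε : ε ≤ 1/2)
    (x : Fin n → ZMod 2) :
    ∑ c ∈ (C : Set (Fin n → ZMod 2)).toFinite.toFinset,
        ε ^ hammingNorm (c - x) * (1-ε) ^ (n - hammingNorm (c - x))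
      ≤ ∑ c ∈ (C : Set (Fin n → ZMod 2)).toFinite.toFinset,
        ε ^ hammingNorm c * (1-ε) ^ (n - hammingNorm c) := by
  classical
  set Cs := (C : Set (Fin n → ZMod 2)).toFinite.toFinset with hCs
  have h2 : (0:ℝ) < 2^n := by positivity
  rw [← mul_le_mul_iff_right₀ h2, Finset.mul_sum, Finset.mul_sum]
  simp_rw [expand ε]
  rw [Finset.sum_comm, Finset.sum_comm (s := Cs)]
  apply Finset.sum_le_sum
  intro S _
  simp_rw [sgn_dot_sub]
  have hL : ∀ c, (1-2*ε) ^ hammingNorm S * (sgn (dot S c) * sgn (dot S x))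
      = ((1-2*ε) ^ hammingNorm S * sgn (dot S x)) * sgn (dot S c) := fun c => by ring
  have hR : ∀ c, (1-2*ε) ^ hammingNorm S * sgn (dot S c)
      = ((1-2*ε) ^ hammingNorm S) * sgn (dot S c) := fun c => rfl
  simp_rw [hL]
  rw [← Finset.mul_sum, ← Finset.mul_sum]
  have hD := charSum_nonneg C S
  have hρ : (0:ℝ) ≤ (1-2*ε) ^ hammingNorm S := by
    apply pow_nonneg; linarith
  have hs := sgn_le_one (dot S x)
  nlinarith [mul_nonneg hρ hD]

lemma sumC (C : Submodule (ZMod 2) (Fin n → ZMod 2)) (ε : ℝ) :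
    ∑ c ∈ (C : Set (Fin n → ZMod 2)).toFinite.toFinset,
        ε ^ hammingNorm c * (1-ε) ^ (n - hammingNorm c)
      = ∑ i ∈ Finset.range (n+1),
        (((C : Set (Fin n → ZMod 2)).toFinite.toFinset.filter
            (fun x => hammingNorm x = i)).card : ℝ) * ε ^ i * (1-ε) ^ (n-i) := by
  classical
  rw [← Finset.sum_fiberwise_of_maps_to (g := hammingNorm)
    (t := Finset.range (n+1)) (fun c _ => by
      simp only [Finset.mem_range, Nat.lt_succ_iff]
      simpa using hammingNorm_le_card_fintype (x := c))]
  apply Finset.sum_congr rfl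
  intro i _
  have : ∀ c ∈ (C : Set (Fin n → ZMod 2)).toFinite.toFinset.filter
      (fun x => hammingNorm x = i),
      ε ^ hammingNorm c * (1-ε) ^ (n - hammingNorm c) = ε ^ i * (1-ε)^(n-i) := by
    intro c hc
    rw [(Finset.mem_filter.mp hc).2]
  rw [Finset.sum_congr rfl this, Finset.sum_const, nsmul_eq_mul, mul_assoc]

theorem stmt11 (n : ℕ) (C : Submodule (ZMod 2) (Fin n → ZMod 2)) (ε : ℝ)
    (hε0 : 0 ≤ ε) (hε : ε ≤ 1 / 2) (a : ℕ → ℕ)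
    (ha : ∀ i, a i = Set.ncard {x : Fin n → ZMod 2 | x ∈ C ∧ hammingNorm x = i})
    (f : (Fin n → ZMod 2) → ℝ)
    (hf : f = Set.indicator (C : Set (Fin n → ZMod 2)) (fun _ => 2 ^ n / (Nat.card C : ℝ))) :
    (⨆ x : Fin n → ZMod 2, noiseOp ε f x) = noiseOp ε f 0 ∧
    noiseOp ε f 0 = (2 ^ n / (Nat.card C : ℝ)) *
      ∑ i ∈ Finset.range (n + 1), (a i : ℝ) * ε ^ i * (1 - ε) ^ (n - i) := by
  classical
  subst hf
  set K : ℝ := 2 ^ n / (Nat.card C : ℝ) with hK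
  set Cs := (C : Set (Fin n → ZMod 2)).toFinite.toFinset with hCs
  have hK0 : 0 ≤ K := by
    apply div_nonneg (by positivity) (by positivity)
  have hrep : ∀ x, noiseOp ε (Set.indicator (C : Set (Fin n → ZMod 2)) fun _ => K) x
      = K * ∑ c ∈ Cs, ε ^ hammingNorm (c - x) * (1-ε) ^ (n - hammingNorm (c - x)) := by
    intro x
    unfold noiseOp
    simp only [Fintype.card_fin]
    have : ∀ y : Fin n → ZMod 2,
        ε ^ hammingDist y x * (1 - ε) ^ (n - hammingDist y x) *
          Set.indicator (C : Set (Fin n → ZMod 2)) (fun _ => K) y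
        = if y ∈ (C : Set (Fin n → ZMod 2)) then
            (ε ^ hammingNorm (y - x) * (1-ε) ^ (n - hammingNorm (y - x))) * K else 0 := by
      intro y
      rw [Set.indicator_apply, hammingDist_comm, hammingDist_eq_hammingNorm, neg_add_eq_sub]
      by_cases h : y ∈ (C : Set (Fin n → ZMod 2)) <;> simp [h]
    simp_rw [this]
    rw [Finset.sum_ite, Finset.sum_const_zero, add_zero, ← Finset.sum_mul, mul_comm]
    congr 1
    apply Finset.sum_congr _ (fun _ _ => rfl)
    ext y
    simp only [Finset.mem_filter, Finset.mem_univ, true_and, hCs, Set.Finite.mem_toFinset,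
      SetLike.mem_coe]
  have hle : ∀ x, noiseOp ε (Set.indicator (C : Set (Fin n → ZMod 2)) fun _ => K) x
      ≤ noiseOp ε (Set.indicator (C : Set (Fin n → ZMod 2)) fun _ => K) 0 := by
    intro x
    rw [hrep x, hrep 0]
    exact mul_le_mul_of_nonneg_left (by simpa only [sub_zero] using key C hε0 hε x) hK0
  constructor
  · exact le_antisymm (ciSup_le hle) (le_ciSup (Set.Finite.bddAbove (Set.finite_range _)) 0)
  · rw [hrep 0]
    simp only [sub_zero]
    rw [sumC]
    congr 1
    apply Finset.sum_congr rfl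
    intro i _
    congr 2
    rw [ha i]
    have hset : {x : Fin n → ZMod 2 | x ∈ C ∧ hammingNorm x = i}
        = ↑(Cs.filter (fun x => hammingNorm x = i)) := by
      ext x
      simp only [Set.mem_setOf_eq, Finset.coe_filter, hCs, Set.Finite.mem_toFinset,
        SetLike.mem_coe]
    rw [hset, Set.ncard_coe_finset]
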